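/- Let g = B_n^+ and f = e*_{ε_i} ∈ g* (dual basis functional to the root vector e_{ε_i}), 1 ≤ i ≤ n. Then the radical g^f = {x ∈ g : f([x,y]) = 0 ∀y ∈ g} is spanned by the root vectors e_β with β ∉ S(ε_i) = ⋃_{k=i+1}^{n}{ε_i − ε_k, ε_k}; consequently dim g/g^f = 2(n − i). -/

import Mathlib

open Matrix
open Fin.NatCast

/-- Roots of `B_n`: `Sum.inl (false, a, b)` is `ε_a − ε_b`, `Sum.inl (true, a, b)` is
`ε_a + ε_b` (with `a < b`), and `Sum.inr a` is the short root `ε_a`. -/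
abbrev BnRoot : Type := (Bool × ℕ × ℕ) ⊕ ℕ

/-- `β` is a positive root of `B_n`. -/
def isPosB (n : ℕ) : BnRoot → Prop
  | Sum.inl (_, a, b) => 1 ≤ a ∧ a < b ∧ b ≤ n
  | Sum.inr a => 1 ≤ a ∧ a ≤ n

/-- The matrix unit `E_{ab}` (1-based indices) inside the `(2n+1) × (2n+1)` matrices. -/
noncomputable def EB (n a b : ℕ) : Matrix (Fin (2 * n + 1)) (Fin (2 * n + 1)) ℂ :=
  Matrix.single ((a - 1 : ℕ) : Fin (2 * n + 1)) ((b - 1 : ℕ) : Fin (2 * n + 1)) 1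

/-- The root vectors of `B_n⁺`. -/
noncomputable def vecB (n : ℕ) : BnRoot → Matrix (Fin (2 * n + 1)) (Fin (2 * n + 1)) ℂ
  | Sum.inl (false, a, b) => EB n a b - EB n (2 * n + 2 - b) (2 * n + 2 - a)
  | Sum.inl (true, a, b) => EB n a (2 * n + 2 - b) - EB n b (2 * n + 2 - a)
  | Sum.inr a => EB n a (n + 1) - EB n (n + 1) (2 * n + 2 - a)

/-- The Lie algebra `g = B_n⁺`, the span of all root vectors. -/
noncomputable def gB (n : ℕ) : Submodule ℂ (Matrix (Fin (2 * n + 1)) (Fin (2 * n + 1)) ℂ) :=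
  Submodule.span ℂ {m | ∃ β : BnRoot, isPosB n β ∧ m = vecB n β}

/-- `β ∈ S(ε_i) = ⋃_{k=i+1}^{n} {ε_i − ε_k, ε_k}`. -/
def inSingEps (n i : ℕ) (β : BnRoot) : Prop :=
  (∃ k, i < k ∧ k ≤ n ∧ β = Sum.inl (false, i, k)) ∨ (∃ k, i < k ∧ k ≤ n ∧ β = Sum.inr k)


section Aux
variable (n : ℕ)

noncomputable def entryLM (r c : Fin (2*n+1)) :
    Matrix (Fin (2*n+1)) (Fin (2*n+1)) ℂ →ₗ[ℂ] ℂ where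
  toFun x := x r c
  map_add' _ _ := rfl
  map_smul' _ _ := rfl

lemma EB_apply (a b : ℕ) (ha : a - 1 < 2*n+1) (hb : b - 1 < 2*n+1)
    (r c : Fin (2*n+1)) :
    EB n a b r c = if r.val = a - 1 ∧ c.val = b - 1 then 1 else 0 := by
  haveI : NeZero (2*n+1) := ⟨by omega⟩
  have h1 : (((a-1 : ℕ) : Fin (2*n+1)) = r) ↔ r.val = a - 1 := by
    rw [Fin.ext_iff, Fin.val_cast_of_lt ha]; exact eq_comm
  have h2 : (((b-1 : ℕ) : Fin (2*n+1)) = c) ↔ c.val = b - 1 := by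
    rw [Fin.ext_iff, Fin.val_cast_of_lt hb]; exact eq_comm
  simp only [EB, Matrix.single, Matrix.of_apply, h1, h2]

lemma mulEB (a b : ℕ) (hb : b - 1 < 2*n+1)
    (x : Matrix (Fin (2*n+1)) (Fin (2*n+1)) ℂ) (r c : Fin (2*n+1)) :
    (x * EB n a b) r c = if c.val = b - 1 then x r (((a-1:ℕ) : Fin (2*n+1))) else 0 := by
  haveI : NeZero (2*n+1) := ⟨by omega⟩
  have h2 : (((b-1 : ℕ) : Fin (2*n+1)) = c) ↔ c.val = b - 1 := by
    rw [Fin.ext_iff, Fin.val_cast_of_lt hb]; exact eq_comm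
  rw [Matrix.mul_apply]
  simp only [EB, Matrix.single, Matrix.of_apply, ite_and, mul_ite, mul_one, mul_zero,
    Finset.sum_ite_eq, Finset.mem_univ, if_true, h2]

lemma EBmul (a b : ℕ) (ha : a - 1 < 2*n+1)
    (x : Matrix (Fin (2*n+1)) (Fin (2*n+1)) ℂ) (r c : Fin (2*n+1)) :
    (EB n a b * x) r c = if r.val = a - 1 then x (((b-1:ℕ) : Fin (2*n+1))) c else 0 := by
  haveI : NeZero (2*n+1) := ⟨by omega⟩
  have h1 : (((a-1 : ℕ) : Fin (2*n+1)) = r) ↔ r.val = a - 1 := by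
    rw [Fin.ext_iff, Fin.val_cast_of_lt ha]; exact eq_comm
  rw [Matrix.mul_apply]
  simp only [EB, Matrix.single, Matrix.of_apply, ite_and, ite_mul, one_mul, zero_mul,
    h1]
  by_cases h : (r : ℕ) = a - 1 <;> simp [h]

lemma brk_false (i a b : ℕ) (h1 : 1 ≤ i) (hin : i ≤ n) (ha : 1 ≤ a) (hab : a < b) (hb : b ≤ n)
    (x : Matrix (Fin (2*n+1)) (Fin (2*n+1)) ℂ) :
    (x * vecB n (Sum.inl (false,a,b)) - vecB n (Sum.inl (false,a,b)) * x)
      ((i-1:ℕ) : Fin (2*n+1)) ((n:ℕ) : Fin (2*n+1))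
    = -(if a = i then x (((b-1:ℕ)) : Fin (2*n+1)) ((n:ℕ) : Fin (2*n+1)) else 0) := by
  haveI : NeZero (2*n+1) := ⟨by omega⟩
  simp only [vecB, Matrix.mul_sub, Matrix.sub_mul, Matrix.sub_apply]
  rw [mulEB n a b (by omega), mulEB n (2*n+2-b) (2*n+2-a) (by omega),
      EBmul n a b (by omega), EBmul n (2*n+2-b) (2*n+2-a) (by omega)]
  rw [Fin.val_cast_of_lt (show i-1 < 2*n+1 by omega), Fin.val_cast_of_lt (show n < 2*n+1 by omega)]
  have e1 : ¬ (n = b - 1) := by omega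
  have e2 : ¬ (n = 2*n+2-a - 1) := by omega
  have e3 : (i - 1 = a - 1) ↔ (a = i) := by omega
  have e4 : ¬ (i - 1 = 2*n+2-b-1) := by omega
  simp [e1, e2, e3, e4]

lemma brk_true (i a b : ℕ) (h1 : 1 ≤ i) (hin : i ≤ n) (ha : 1 ≤ a) (hab : a < b) (hb : b ≤ n)
    (x : Matrix (Fin (2*n+1)) (Fin (2*n+1)) ℂ) :
    (x * vecB n (Sum.inl (true,a,b)) - vecB n (Sum.inl (true,a,b)) * x)
      ((i-1:ℕ) : Fin (2*n+1)) ((n:ℕ) : Fin (2*n+1))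
    = -(if a = i then x (((2*n+2-b-1:ℕ)) : Fin (2*n+1)) ((n:ℕ) : Fin (2*n+1)) else 0)
      + (if b = i then x (((2*n+2-a-1:ℕ)) : Fin (2*n+1)) ((n:ℕ) : Fin (2*n+1)) else 0) := by
  haveI : NeZero (2*n+1) := ⟨by omega⟩
  simp only [vecB, Matrix.mul_sub, Matrix.sub_mul, Matrix.sub_apply]
  rw [mulEB n a (2*n+2-b) (by omega), mulEB n b (2*n+2-a) (by omega),
      EBmul n a (2*n+2-b) (by omega), EBmul n b (2*n+2-a) (by omega)]
  rw [Fin.val_cast_of_lt (show i-1 < 2*n+1 by omega), Fin.val_cast_of_lt (show n < 2*n+1 by omega)]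
  have e1 : ¬ (n = 2*n+2-b - 1) := by omega
  have e2 : ¬ (n = 2*n+2-a - 1) := by omega
  have e3 : (i - 1 = a - 1) ↔ (a = i) := by omega
  have e4 : (i - 1 = b - 1) ↔ (b = i) := by omega
  simp [e1, e2, e3, e4]
  ring

lemma brk_short (i a : ℕ) (h1 : 1 ≤ i) (hin : i ≤ n) (ha : 1 ≤ a) (han : a ≤ n)
    (x : Matrix (Fin (2*n+1)) (Fin (2*n+1)) ℂ) :
    (x * vecB n (Sum.inr a) - vecB n (Sum.inr a) * x)
      ((i-1:ℕ) : Fin (2*n+1)) ((n:ℕ) : Fin (2*n+1))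
    = x ((i-1:ℕ) : Fin (2*n+1)) (((a-1:ℕ)) : Fin (2*n+1))
      - (if a = i then x ((n:ℕ) : Fin (2*n+1)) ((n:ℕ) : Fin (2*n+1)) else 0) := by
  haveI : NeZero (2*n+1) := ⟨by omega⟩
  simp only [vecB, Matrix.mul_sub, Matrix.sub_mul, Matrix.sub_apply]
  rw [mulEB n a (n+1) (by omega), mulEB n (n+1) (2*n+2-a) (by omega),
      EBmul n a (n+1) (by omega), EBmul n (n+1) (2*n+2-a) (by omega)]
  rw [Fin.val_cast_of_lt (show i-1 < 2*n+1 by omega), Fin.val_cast_of_lt (show n < 2*n+1 by omega)]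
  have e2 : ¬ (n = 2*n+2-a-1) := by omega
  have e3 : (i - 1 = a - 1) ↔ (a = i) := by omega
  have e4 : ¬ (i - 1 = n) := by omega
  simp [Nat.add_sub_cancel, e2, e3, e4]

/-- the submodule of "strictly upper triangular" matrices -/
noncomputable def lowSub : Submodule ℂ (Matrix (Fin (2*n+1)) (Fin (2*n+1)) ℂ) where
  carrier := {x | ∀ r c : Fin (2*n+1), (c:ℕ) ≤ (r:ℕ) → x r c = 0}
  add_mem' := by
    intro x y hx hy r c h
    simp only [Matrix.add_apply, hx r c h, hy r c h, add_zero]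
  zero_mem' := by intro r c h; rfl
  smul_mem' := by
    intro a x hx r c h
    simp only [Matrix.smul_apply, hx r c h, smul_zero]

lemma EB_zero (a b : ℕ) (ha : a - 1 < 2*n+1) (hb : b - 1 < 2*n+1)
    (r c : Fin (2*n+1)) (h : ¬((r:ℕ) = a-1 ∧ (c:ℕ) = b-1)) : EB n a b r c = 0 := by
  rw [EB_apply n a b ha hb, if_neg h]

lemma gB_tri {x : Matrix (Fin (2*n+1)) (Fin (2*n+1)) ℂ} (hx : x ∈ gB n)
    (r c : Fin (2*n+1)) (hrc : (c:ℕ) ≤ (r:ℕ)) : x r c = 0 := by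
  haveI : NeZero (2*n+1) := ⟨by omega⟩
  have hle : gB n ≤ lowSub n := by
    rw [gB]
    refine Submodule.span_le.2 ?_
    rintro m ⟨β, hβ, rfl⟩
    rcases β with ⟨b, a, b'⟩ | a
    · obtain ⟨h1, h2, h3⟩ := hβ
      rcases b with _ | _
      · intro r c hrc
        simp only [vecB, Matrix.sub_apply]
        rw [EB_zero n a b' (by omega) (by omega) r c (by omega),
          EB_zero n (2*n+2-b') (2*n+2-a) (by omega) (by omega) r c (by omega), sub_zero]
      · intro r c hrc
        simp only [vecB, Matrix.sub_apply]
        rw [EB_zero n a (2*n+2-b') (by omega) (by omega) r c (by omega),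
          EB_zero n b' (2*n+2-a) (by omega) (by omega) r c (by omega), sub_zero]
    · obtain ⟨h1, h2⟩ := hβ
      intro r c hrc
      simp only [vecB, Matrix.sub_apply]
      rw [EB_zero n a (n+1) (by omega) (by omega) r c (by omega),
        EB_zero n (n+1) (2*n+2-a) (by omega) (by omega) r c (by omega), sub_zero]
  exact hle hx r c hrc

noncomputable def brkLM (i : ℕ) (x : Matrix (Fin (2*n+1)) (Fin (2*n+1)) ℂ) :
    Matrix (Fin (2*n+1)) (Fin (2*n+1)) ℂ →ₗ[ℂ] ℂ :=
  entryLM n ((i-1:ℕ) : Fin (2*n+1)) ((n:ℕ) : Fin (2*n+1)) ∘ₗ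
    (LinearMap.mulLeft ℂ x - LinearMap.mulRight ℂ x)

lemma brkLM_apply (i : ℕ) (x y : Matrix (Fin (2*n+1)) (Fin (2*n+1)) ℂ) :
    brkLM n i x y = (x * y - y * x) ((i-1:ℕ) : Fin (2*n+1)) ((n:ℕ) : Fin (2*n+1)) := by
  simp [brkLM, entryLM, LinearMap.mulLeft_apply, LinearMap.mulRight_apply, Matrix.sub_apply]
  rfl

lemma rad_iff (i : ℕ) (h1 : 1 ≤ i) (hin : i ≤ n)
    (x : Matrix (Fin (2*n+1)) (Fin (2*n+1)) ℂ) (hx : x ∈ gB n) :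
    (∀ y ∈ gB n, (x * y - y * x) ((i-1:ℕ) : Fin (2*n+1)) ((n:ℕ) : Fin (2*n+1)) = 0) ↔
    (∀ k, i < k → k ≤ n →
      x ((i-1:ℕ) : Fin (2*n+1)) ((k-1:ℕ) : Fin (2*n+1)) = 0 ∧
      x ((k-1:ℕ) : Fin (2*n+1)) ((n:ℕ) : Fin (2*n+1)) = 0) := by
  haveI : NeZero (2*n+1) := ⟨by omega⟩
  constructor
  · intro h k hik hkn
    constructor
    · have hm : vecB n (Sum.inr k) ∈ gB n :=
        Submodule.subset_span ⟨Sum.inr k, ⟨by omega, hkn⟩, rfl⟩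
      have := h _ hm
      rw [brk_short n i k h1 hin (by omega) hkn x, if_neg (by omega), sub_zero] at this
      exact this
    · have hm : vecB n (Sum.inl (false, i, k)) ∈ gB n :=
        Submodule.subset_span ⟨Sum.inl (false, i, k), ⟨h1, hik, hkn⟩, rfl⟩
      have := h _ hm
      rw [brk_false n i i k h1 hin h1 hik hkn x, if_pos rfl, neg_eq_zero] at this
      exact this
  · intro h y hy
    rw [← brkLM_apply]
    have hle : gB n ≤ LinearMap.ker (brkLM n i x) := by
      rw [gB]
      refine Submodule.span_le.2 ?_
      rintro m ⟨β, hβ, rfl⟩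
      rw [SetLike.mem_coe, LinearMap.mem_ker, brkLM_apply]
      rcases β with ⟨b, a, b'⟩ | a
      · obtain ⟨ha1, hab, hbn⟩ := hβ
        rcases b with _ | _
        · rw [brk_false n i a b' h1 hin ha1 hab hbn x]
          rcases eq_or_ne a i with rfl | hne
          · rw [if_pos rfl, (h b' hab hbn).2, neg_zero]
          · rw [if_neg hne, neg_zero]
        · rw [brk_true n i a b' h1 hin ha1 hab hbn x]
          rw [gB_tri n hx _ _ (by
            rw [Fin.val_cast_of_lt (show 2*n+2-b'-1 < 2*n+1 by omega),
              Fin.val_cast_of_lt (show n < 2*n+1 by omega)]; omega)]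
          rw [gB_tri n hx _ _ (by
            rw [Fin.val_cast_of_lt (show 2*n+2-a-1 < 2*n+1 by omega),
              Fin.val_cast_of_lt (show n < 2*n+1 by omega)]; omega)]
          simp
      · obtain ⟨ha1, han⟩ := hβ
        rw [brk_short n i a h1 hin ha1 han x]
        have hdiag : x ((n:ℕ) : Fin (2*n+1)) ((n:ℕ) : Fin (2*n+1)) = 0 :=
          gB_tri n hx _ _ le_rfl
        rcases lt_trichotomy a i with hlt | rfl | hgt
        · rw [if_neg (by omega), sub_zero]
          exact gB_tri n hx _ _ (by
            rw [Fin.val_cast_of_lt (show a-1 < 2*n+1 by omega),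
              Fin.val_cast_of_lt (show i-1 < 2*n+1 by omega)]; omega)
        · rw [if_pos rfl, hdiag, sub_zero]
          exact gB_tri n hx _ _ le_rfl
        · rw [if_neg (by omega), sub_zero]
          exact (h a hgt han).1
    exact hle hy

noncomputable def Phi (i : ℕ) :
    Matrix (Fin (2*n+1)) (Fin (2*n+1)) ℂ →ₗ[ℂ] ((Fin (n-i) ⊕ Fin (n-i)) → ℂ) :=
  LinearMap.pi (Sum.elim
    (fun j => entryLM n ((i-1:ℕ) : Fin (2*n+1)) ((i+(j:ℕ) : ℕ) : Fin (2*n+1)))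
    (fun j => entryLM n ((i+(j:ℕ) : ℕ) : Fin (2*n+1)) ((n:ℕ) : Fin (2*n+1))))

lemma Phi_inl (i : ℕ) (x : Matrix (Fin (2*n+1)) (Fin (2*n+1)) ℂ) (j : Fin (n-i)) :
    Phi n i x (Sum.inl j) = x ((i-1:ℕ) : Fin (2*n+1)) ((i+(j:ℕ) : ℕ) : Fin (2*n+1)) := rfl

lemma Phi_inr (i : ℕ) (x : Matrix (Fin (2*n+1)) (Fin (2*n+1)) ℂ) (j : Fin (n-i)) :
    Phi n i x (Sum.inr j) = x ((i+(j:ℕ) : ℕ) : Fin (2*n+1)) ((n:ℕ) : Fin (2*n+1)) := rfl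

noncomputable def vv (i : ℕ) : (Fin (n-i) ⊕ Fin (n-i)) → Matrix (Fin (2*n+1)) (Fin (2*n+1)) ℂ :=
  Sum.elim (fun j => vecB n (Sum.inl (false, i, i+1+(j:ℕ)))) (fun j => vecB n (Sum.inr (i+1+(j:ℕ))))

lemma Phi_vv (i : ℕ) (h1 : 1 ≤ i) (hin : i ≤ n) (s : Fin (n-i) ⊕ Fin (n-i)) :
    Phi n i (vv n i s) = Pi.single s 1 := by
  haveI : NeZero (2*n+1) := ⟨by omega⟩
  funext t
  rcases s with j | j <;> rcases t with j' | j' <;>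
    have hj := j.isLt <;> have hj' := j'.isLt
  · rw [Phi_inl, Pi.single_apply]
    simp only [vv, Sum.elim_inl, vecB, Matrix.sub_apply,
      EB_apply n i (i+1+(j:ℕ)) (by omega) (by omega),
      EB_apply n (2*n+2-(i+1+(j:ℕ))) (2*n+2-i) (by omega) (by omega)]
    rw [Fin.val_cast_of_lt (show i-1 < 2*n+1 by omega),
      Fin.val_cast_of_lt (show i+(j':ℕ) < 2*n+1 by omega)]
    have hC2 : ¬ (i - 1 = 2*n+2-(i+1+(j:ℕ))-1 ∧ i+(j':ℕ) = 2*n+2-i-1) := by omega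
    rw [if_neg hC2, sub_zero]
    by_cases hjj : (j':ℕ) = (j:ℕ)
    · rw [if_pos (by omega), if_pos (by simp [Fin.ext_iff, hjj])]
    · rw [if_neg (by omega), if_neg (by simp [Fin.ext_iff, hjj])]
  · rw [Phi_inr, Pi.single_apply]
    simp only [vv, Sum.elim_inl, vecB, Matrix.sub_apply,
      EB_apply n i (i+1+(j:ℕ)) (by omega) (by omega),
      EB_apply n (2*n+2-(i+1+(j:ℕ))) (2*n+2-i) (by omega) (by omega)]
    rw [Fin.val_cast_of_lt (show i+(j':ℕ) < 2*n+1 by omega),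
      Fin.val_cast_of_lt (show n < 2*n+1 by omega)]
    rw [if_neg (by omega), if_neg (by omega), sub_zero]
    rw [if_neg (by simp)]
  · rw [Phi_inl, Pi.single_apply]
    simp only [vv, Sum.elim_inr, vecB, Matrix.sub_apply,
      EB_apply n (i+1+(j:ℕ)) (n+1) (by omega) (by omega),
      EB_apply n (n+1) (2*n+2-(i+1+(j:ℕ))) (by omega) (by omega)]
    rw [Fin.val_cast_of_lt (show i-1 < 2*n+1 by omega),
      Fin.val_cast_of_lt (show i+(j':ℕ) < 2*n+1 by omega)]
    rw [if_neg (by omega), if_neg (by omega), sub_zero]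
    rw [if_neg (by simp)]
  · rw [Phi_inr, Pi.single_apply]
    simp only [vv, Sum.elim_inr, vecB, Matrix.sub_apply,
      EB_apply n (i+1+(j:ℕ)) (n+1) (by omega) (by omega),
      EB_apply n (n+1) (2*n+2-(i+1+(j:ℕ))) (by omega) (by omega)]
    rw [Fin.val_cast_of_lt (show i+(j':ℕ) < 2*n+1 by omega),
      Fin.val_cast_of_lt (show n < 2*n+1 by omega)]
    have hC2 : ¬ (i+(j':ℕ) = n+1-1 ∧ n = 2*n+2-(i+1+(j:ℕ))-1) := by omega
    rw [if_neg hC2, sub_zero]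
    by_cases hjj : (j':ℕ) = (j:ℕ)
    · rw [if_pos (by omega), if_pos (by simp [Fin.ext_iff, hjj])]
    · rw [if_neg (by omega), if_neg (by simp [Fin.ext_iff, hjj])]

end Aux

section Aux2
variable (n : ℕ)

lemma Phi_vecB_zero (i : ℕ) (h1 : 1 ≤ i) (hin : i ≤ n) (β : BnRoot) (hβ : isPosB n β)
    (hns : ¬ inSingEps n i β) : Phi n i (vecB n β) = 0 := by
  haveI : NeZero (2*n+1) := ⟨by omega⟩
  funext t
  rcases β with ⟨b, a, b'⟩ | a
  · obtain ⟨ha1, hab, hbn⟩ := hβ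
    rcases b with _ | _
    · have hfact : ¬ (a = i ∧ i < b') := by
        rintro ⟨rfl, hib⟩
        exact hns (Or.inl ⟨b', hib, hbn, rfl⟩)
      rcases t with j' | j' <;> have hj' := j'.isLt
      · rw [Phi_inl]
        simp only [vecB, Matrix.sub_apply,
          EB_apply n a b' (by omega) (by omega),
          EB_apply n (2*n+2-b') (2*n+2-a) (by omega) (by omega)]
        rw [Fin.val_cast_of_lt (show i-1 < 2*n+1 by omega),
          Fin.val_cast_of_lt (show i+(j':ℕ) < 2*n+1 by omega)]
        rw [if_neg (by omega), if_neg (by omega)]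
        simp
      · rw [Phi_inr]
        simp only [vecB, Matrix.sub_apply,
          EB_apply n a b' (by omega) (by omega),
          EB_apply n (2*n+2-b') (2*n+2-a) (by omega) (by omega)]
        rw [Fin.val_cast_of_lt (show i+(j':ℕ) < 2*n+1 by omega),
          Fin.val_cast_of_lt (show n < 2*n+1 by omega)]
        rw [if_neg (by omega), if_neg (by omega)]
        simp
    · rcases t with j' | j' <;> have hj' := j'.isLt
      · rw [Phi_inl]
        simp only [vecB, Matrix.sub_apply,
          EB_apply n a (2*n+2-b') (by omega) (by omega),
          EB_apply n b' (2*n+2-a) (by omega) (by omega)]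
        rw [Fin.val_cast_of_lt (show i-1 < 2*n+1 by omega),
          Fin.val_cast_of_lt (show i+(j':ℕ) < 2*n+1 by omega)]
        rw [if_neg (by omega), if_neg (by omega)]
        simp
      · rw [Phi_inr]
        simp only [vecB, Matrix.sub_apply,
          EB_apply n a (2*n+2-b') (by omega) (by omega),
          EB_apply n b' (2*n+2-a) (by omega) (by omega)]
        rw [Fin.val_cast_of_lt (show i+(j':ℕ) < 2*n+1 by omega),
          Fin.val_cast_of_lt (show n < 2*n+1 by omega)]
        rw [if_neg (by omega), if_neg (by omega)]
        simp
  · obtain ⟨ha1, han⟩ := hβ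
    have hfact : a ≤ i := by
      by_contra hgt
      exact hns (Or.inr ⟨a, by omega, han, rfl⟩)
    rcases t with j' | j' <;> have hj' := j'.isLt
    · rw [Phi_inl]
      simp only [vecB, Matrix.sub_apply,
        EB_apply n a (n+1) (by omega) (by omega),
        EB_apply n (n+1) (2*n+2-a) (by omega) (by omega)]
      rw [Fin.val_cast_of_lt (show i-1 < 2*n+1 by omega),
        Fin.val_cast_of_lt (show i+(j':ℕ) < 2*n+1 by omega)]
      rw [if_neg (by omega), if_neg (by omega)]
      simp
    · rw [Phi_inr]
      simp only [vecB, Matrix.sub_apply,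
        EB_apply n a (n+1) (by omega) (by omega),
        EB_apply n (n+1) (2*n+2-a) (by omega) (by omega)]
      rw [Fin.val_cast_of_lt (show i+(j':ℕ) < 2*n+1 by omega),
        Fin.val_cast_of_lt (show n < 2*n+1 by omega)]
      rw [if_neg (by omega), if_neg (by omega)]
      simp

lemma gens_eq (i : ℕ) (h1 : 1 ≤ i) (hin : i ≤ n) :
    {m : Matrix (Fin (2*n+1)) (Fin (2*n+1)) ℂ | ∃ β, isPosB n β ∧ m = vecB n β}
    = {m | ∃ β, isPosB n β ∧ ¬ inSingEps n i β ∧ m = vecB n β} ∪ Set.range (vv n i) := by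
  ext m
  constructor
  · rintro ⟨β, hβ, rfl⟩
    by_cases hs : inSingEps n i β
    · right
      rcases hs with ⟨k, hik, hkn, rfl⟩ | ⟨k, hik, hkn, rfl⟩
      · refine ⟨Sum.inl ⟨k-i-1, by omega⟩, ?_⟩
        show vecB n (Sum.inl (false, i, i+1+(k-i-1))) = _
        rw [show i+1+(k-i-1) = k by omega]
      · refine ⟨Sum.inr ⟨k-i-1, by omega⟩, ?_⟩
        show vecB n (Sum.inr (i+1+(k-i-1))) = _
        rw [show i+1+(k-i-1) = k by omega]
    · exact Or.inl ⟨β, hβ, hs, rfl⟩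
  · rintro (⟨β, hβ, _, rfl⟩ | ⟨s, rfl⟩)
    · exact ⟨β, hβ, rfl⟩
    · rcases s with j | j <;> have hj := j.isLt
      · exact ⟨Sum.inl (false, i, i+1+(j:ℕ)), ⟨h1, by omega, by omega⟩, rfl⟩
      · exact ⟨Sum.inr (i+1+(j:ℕ)), ⟨by omega, by omega⟩, rfl⟩

end Aux2


/-- Let `g = B_n⁺` and `f = e*_{ε_i}` (the dual functional to `e_{ε_i}`, which reads the
`(i, n+1)` matrix entry), `1 ≤ i ≤ n`.  Then the radical
`g^f = {x ∈ g : f([x,y]) = 0 ∀ y ∈ g}` is spanned by the root vectors `e_β` with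
`β ∉ S(ε_i) = ⋃_{k=i+1}^{n} {ε_i − ε_k, ε_k}`; consequently `dim g/g^f = 2(n − i)`. -/
theorem stmt19 (n i : ℕ) (h1 : 1 ≤ i) (hin : i ≤ n)
    (W : Submodule ℂ (Matrix (Fin (2 * n + 1)) (Fin (2 * n + 1)) ℂ))
    (hW : W = Submodule.span ℂ
      {m | ∃ β : BnRoot, isPosB n β ∧ ¬ inSingEps n i β ∧ m = vecB n β}) :
    {x | x ∈ gB n ∧ ∀ y ∈ gB n,
        ((x * y - y * x) ((i - 1 : ℕ) : Fin (2 * n + 1)) ((n : ℕ) : Fin (2 * n + 1)) = 0)}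
      = (W : Set _) ∧
    Module.finrank ℂ (gB n) = Module.finrank ℂ W + 2 * (n - i) := by
  haveI : NeZero (2*n+1) := ⟨by omega⟩
  set U : Submodule ℂ (Matrix (Fin (2*n+1)) (Fin (2*n+1)) ℂ) :=
    Submodule.span ℂ (Set.range (vv n i)) with hU
  have hsup : gB n = W ⊔ U := by
    rw [hW, hU, ← Submodule.span_union, gB, gens_eq n i h1 hin]
  have hWle : W ≤ LinearMap.ker (Phi n i) := by
    rw [hW]
    refine Submodule.span_le.2 ?_
    rintro m ⟨β, hβ, hns, rfl⟩
    exact LinearMap.mem_ker.2 (Phi_vecB_zero n i h1 hin β hβ hns)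
  have hlin : LinearIndependent ℂ (⇑(Phi n i) ∘ vv n i) := by
    have he : ⇑(Phi n i) ∘ vv n i = ⇑(Pi.basisFun ℂ (Fin (n-i) ⊕ Fin (n-i))) := by
      funext s
      rw [Function.comp_apply, Phi_vv n i h1 hin s, Pi.basisFun_apply]
    rw [he]
    exact (Pi.basisFun ℂ (Fin (n-i) ⊕ Fin (n-i))).linearIndependent
  have hdisj : Disjoint U (LinearMap.ker (Phi n i)) := Submodule.range_ker_disjoint hlin
  have hvli : LinearIndependent ℂ (vv n i) := hlin.of_comp (Phi n i)
  constructor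
  · ext x
    simp only [Set.mem_setOf_eq, SetLike.mem_coe]
    constructor
    · rintro ⟨hx, hbr⟩
      have hcond := (rad_iff n i h1 hin x hx).1 hbr
      have hPhix : Phi n i x = 0 := by
        funext s
        rcases s with j | j <;> have hj := j.isLt
        · rw [Phi_inl]
          have h2 := (hcond (i+1+(j:ℕ)) (by omega) (by omega)).1
          rw [show i+1+(j:ℕ)-1 = i+(j:ℕ) by omega] at h2
          simpa using h2
        · rw [Phi_inr]
          have h2 := (hcond (i+1+(j:ℕ)) (by omega) (by omega)).2
          rw [show i+1+(j:ℕ)-1 = i+(j:ℕ) by omega] at h2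
          simpa using h2
      rw [hsup] at hx
      rcases Submodule.mem_sup.1 hx with ⟨w, hw, u, hu, rfl⟩
      have hwk : Phi n i w = 0 := hWle hw
      have huk : u ∈ LinearMap.ker (Phi n i) := by
        rw [LinearMap.mem_ker]
        have := hPhix
        rw [map_add, hwk, zero_add] at this
        exact this
      have hu0 : u = 0 := by
        have := hdisj.le_bot (Submodule.mem_inf.2 ⟨hu, huk⟩)
        simpa using this
      rw [hu0, add_zero]
      exact hw
    · intro hxW
      have hx : x ∈ gB n := by
        rw [hsup]
        exact (le_sup_left : W ≤ W ⊔ U) hxW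
      refine ⟨hx, (rad_iff n i h1 hin x hx).2 ?_⟩
      intro k hik hkn
      have hPhix : Phi n i x = 0 := hWle hxW
      constructor
      · have h2 := congr_fun hPhix (Sum.inl ⟨k-i-1, by omega⟩)
        rw [Phi_inl] at h2
        simp only [Pi.zero_apply] at h2
        rw [show i+((⟨k-i-1, by omega⟩ : Fin (n-i)):ℕ) = k-1 from by simp; omega] at h2
        exact h2
      · have h2 := congr_fun hPhix (Sum.inr ⟨k-i-1, by omega⟩)
        rw [Phi_inr] at h2
        simp only [Pi.zero_apply] at h2
        rw [show i+((⟨k-i-1, by omega⟩ : Fin (n-i)):ℕ) = k-1 from by simp; omega] at h2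
        exact h2
  · have hWU : W ⊓ U = ⊥ := by
      have hd : Disjoint W U := (hdisj.mono_right hWle).symm
      exact disjoint_iff.1 hd
    have hrank := Submodule.finrank_sup_add_finrank_inf_eq W U
    rw [hWU, finrank_bot, add_zero] at hrank
    rw [hsup, hrank]
    congr 1
    rw [hU, finrank_span_eq_card hvli]
    simp only [Fintype.card_sum, Fintype.card_fin]
    omega
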